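/- Let n, m ≥ 1, let d₁ be an n×n and d₂ an m×m positive definite complex matrix each of trace 1 (defining faithful states ρ₁(y) = Tr(d₁ y) and ρ₂(z) = Tr(d₂ z)), let a be an n×n complex matrix with a* a ≤ 1, let I ⊆ ℝ be an interval with 0 ∈ I, and let f : ℝ → ℝ be operator convex on I with f(0) ≤ 0, i.e. for every k ≥ 1, all Hermitian k×k matrices u, v with eigenvalues in I, and every t ∈ [0,1], one has f(t·u + (1−t)·v) ≤ t·f(u) + (1−t)·f(v) in the Loewner order. Let H be a Hermitian matrix indexed by Fin n × Fin m with all eigenvalues in I. Then the matrix K := Tr₁((d₁ ⊗ 1)(a* ⊗ 1) H (a ⊗ 1)) is Hermitian with all eigenvalues in I, and Tr(d₂ · f(K)) ≤ Tr(d₁ · a* · Tr₂((1 ⊗ d₂) f(H)) · a). -/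

import Mathlib

open Matrix
open scoped ComplexOrder

/-- The partial trace over the first factor: `(Tr₁ X)_{j,l} = ∑ᵢ X_{(i,j),(i,l)}`. -/
noncomputable def ptrace1 {n m : ℕ} (X : Matrix (Fin n × Fin m) (Fin n × Fin m) ℂ) :
    Matrix (Fin m) (Fin m) ℂ :=
  Matrix.of fun j l => ∑ i : Fin n, X (i, j) (i, l)

/-- The partial trace over the second factor: `(Tr₂ X)_{i,k} = ∑ⱼ X_{(i,j),(k,j)}`. -/
noncomputable def ptrace2 {n m : ℕ} (X : Matrix (Fin n × Fin m) (Fin n × Fin m) ℂ) :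
    Matrix (Fin n) (Fin n) ℂ :=
  Matrix.of fun i k => ∑ j : Fin m, X (i, j) (k, j)

/-- `a ⊗ 1`, with entries `(a ⊗ 1)_{(i,j),(k,l)} = a_{i,k} δ_{j,l}`. -/
noncomputable def tensorOne {n m : ℕ} (a : Matrix (Fin n) (Fin n) ℂ) :
    Matrix (Fin n × Fin m) (Fin n × Fin m) ℂ :=
  Matrix.of fun p q => a p.1 q.1 * (if p.2 = q.2 then 1 else 0)

/-- `g` applied to a Hermitian matrix via the functional calculus
(`g(A) = ∑ᵢ g(λᵢ) Pᵢ` for the spectral decomposition `A = ∑ᵢ λᵢ Pᵢ`). -/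
noncomputable def matFun {k : Type*} [Fintype k] [DecidableEq k]
    {A : Matrix k k ℂ} (hA : A.IsHermitian) (g : ℝ → ℝ) : Matrix k k ℂ := hA.cfc g

/-- `1 ⊗ b`, with entries `(1 ⊗ b)_{(i,j),(k,l)} = δ_{i,k} b_{j,l}`. -/
noncomputable def oneTensor {n m : ℕ} (b : Matrix (Fin m) (Fin m) ℂ) :
    Matrix (Fin n × Fin m) (Fin n × Fin m) ℂ :=
  Matrix.of fun p q => (if p.1 = q.1 then 1 else 0) * b p.2 q.2


namespace JensenAux

open Polynomial
open scoped Kronecker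

variable {κ κ₁ κ₂ : Type*} [Fintype κ] [DecidableEq κ]
  [Fintype κ₁] [DecidableEq κ₁] [Fintype κ₂] [DecidableEq κ₂]

noncomputable def ns (x : κ → ℂ) : ℝ := ∑ i, Complex.normSq (x i)

lemma ns_nonneg (x : κ → ℂ) : 0 ≤ ns x :=
  Finset.sum_nonneg fun i _ => Complex.normSq_nonneg _

lemma star_mul_self_eq (z : ℂ) : star z * z = ((Complex.normSq z : ℝ) : ℂ) := by
  rw [Complex.star_def, ← Complex.normSq_eq_conj_mul_self]

lemma star_dotProduct_self (x : κ → ℂ) : star x ⬝ᵥ x = ((ns x : ℝ) : ℂ) := by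
  simp only [dotProduct, Pi.star_apply, ns, Complex.ofReal_sum, star_mul_self_eq]

/-- quadratic-form bounds predicate -/
def QF (B : Matrix κ κ ℂ) (α β : ℝ) : Prop :=
  ∀ x : κ → ℂ, ∃ r : ℝ, star x ⬝ᵥ (B *ᵥ x) = (r : ℂ) ∧ α * ns x ≤ r ∧ r ≤ β * ns x

lemma qf_spectral {A : Matrix κ κ ℂ} (hA : A.IsHermitian) {α β : ℝ}
    (h : ∀ i, hA.eigenvalues i ∈ Set.Icc α β) : QF A α β := by
  intro x
  set U : Matrix κ κ ℂ := (hA.eigenvectorUnitary : Matrix κ κ ℂ) with hU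
  have hU2 : U * star U = 1 := Unitary.mul_star_self_of_mem (SetLike.coe_mem _)
  set y : κ → ℂ := star U *ᵥ x with hy
  have hsy : star y = star x ᵥ* U := by
    rw [hy, star_mulVec, star_eq_conjTranspose, conjTranspose_conjTranspose]
  have key : star x ⬝ᵥ (A *ᵥ x)
      = ∑ i, ((hA.eigenvalues i : ℝ) : ℂ) * ((Complex.normSq (y i) : ℝ) : ℂ) := by
    conv_lhs => rw [hA.spectral_theorem, Unitary.conjStarAlgAut_apply]
    rw [← mulVec_mulVec, ← mulVec_mulVec, dotProduct_mulVec, ← hsy]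
    simp only [dotProduct, mulVec_diagonal, Pi.star_apply, Function.comp_apply]
    refine Finset.sum_congr rfl fun i _ => ?_
    rw [show (RCLike.ofReal (hA.eigenvalues i) : ℂ) = ((hA.eigenvalues i : ℝ) : ℂ) from rfl,
      ← star_mul_self_eq]
    ring
  have hns : ns y = ns x := by
    have h1 : star y ⬝ᵥ y = star x ⬝ᵥ x := by
      rw [hsy, hy, ← dotProduct_mulVec, mulVec_mulVec, hU2, one_mulVec]
    rw [star_dotProduct_self, star_dotProduct_self] at h1
    exact_mod_cast h1
  refine ⟨∑ i, hA.eigenvalues i * Complex.normSq (y i), ?_, ?_, ?_⟩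
  · rw [key]; push_cast; rfl
  · rw [← hns, ns, Finset.mul_sum]
    exact Finset.sum_le_sum fun i _ =>
      mul_le_mul_of_nonneg_right (h i).1 (Complex.normSq_nonneg _)
  · rw [← hns, ns, Finset.mul_sum]
    exact Finset.sum_le_sum fun i _ =>
      mul_le_mul_of_nonneg_right (h i).2 (Complex.normSq_nonneg _)

lemma eig_mem_of_QF {A : Matrix κ κ ℂ} (hA : A.IsHermitian) {α β : ℝ}
    (h : QF A α β) (i : κ) : hA.eigenvalues i ∈ Set.Icc α β := by
  obtain ⟨r, h1, h2, h3⟩ := h ((WithLp.equiv 2 _) (hA.eigenvectorBasis i))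
  have hx1 : star ((WithLp.equiv 2 _) (hA.eigenvectorBasis i)) ⬝ᵥ
      ((WithLp.equiv 2 _) (hA.eigenvectorBasis i)) = 1 := by
    rw [WithLp.equiv_apply, dotProduct_comm, ← EuclideanSpace.inner_eq_star_dotProduct,
      inner_self_eq_norm_sq_to_K,
      hA.eigenvectorBasis.orthonormal.1 i]
    norm_num
  have hq : star ((WithLp.equiv 2 _) (hA.eigenvectorBasis i)) ⬝ᵥ
      (A *ᵥ (WithLp.equiv 2 _) (hA.eigenvectorBasis i)) = ((hA.eigenvalues i : ℝ) : ℂ) := by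
    rw [WithLp.equiv_apply] at hx1 ⊢
    rw [hA.mulVec_eigenvectorBasis, RCLike.real_smul_eq_coe_smul (K := ℂ)]
    rw [dotProduct_smul, hx1, smul_eq_mul, mul_one]
    rfl
  have hns1 : ns ((WithLp.equiv 2 _) (hA.eigenvectorBasis i)) = 1 := by
    have h4 := star_dotProduct_self ((WithLp.equiv 2 _) (hA.eigenvectorBasis i))
    rw [hx1] at h4
    exact_mod_cast h4.symm
  rw [hq] at h1
  have hr : hA.eigenvalues i = r := by exact_mod_cast h1
  rw [hns1, mul_one] at h2 h3
  exact ⟨hr ▸ h2, hr ▸ h3⟩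

lemma QF.conjIso {B : Matrix κ₁ κ₁ ℂ} {α β : ℝ} (h : QF B α β)
    (C : Matrix κ₁ κ₂ ℂ) (hC : Cᴴ * C = 1) : QF (Cᴴ * B * C) α β := by
  intro x
  obtain ⟨r, h1, h2, h3⟩ := h (C *ᵥ x)
  have key : star x ⬝ᵥ ((Cᴴ * B * C) *ᵥ x) = star (C *ᵥ x) ⬝ᵥ (B *ᵥ (C *ᵥ x)) := by
    rw [star_mulVec, ← dotProduct_mulVec, mulVec_mulVec, mulVec_mulVec]
  have hns : ns (C *ᵥ x) = ns x := by
    have h4 : star (C *ᵥ x) ⬝ᵥ (C *ᵥ x) = star x ⬝ᵥ x := by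
      rw [star_mulVec, ← dotProduct_mulVec, mulVec_mulVec, hC, one_mulVec]
    rw [star_dotProduct_self, star_dotProduct_self] at h4
    exact_mod_cast h4
  exact ⟨r, by rw [key, h1], by rw [← hns]; exact h2, by rw [← hns]; exact h3⟩

lemma QF.submatrix {B : Matrix κ₁ κ₁ ℂ} {α β : ℝ} (h : QF B α β) (e : κ₂ ≃ κ₁) :
    QF (B.submatrix e e) α β := by
  intro x
  obtain ⟨r, h1, h2, h3⟩ := h (fun i => x (e.symm i))
  have hns : ns (fun i => x (e.symm i)) = ns x := by
    unfold ns
    exact Fintype.sum_equiv e.symm _ _ fun i => rfl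
  have key : star x ⬝ᵥ (B.submatrix e e *ᵥ x)
      = star (fun i => x (e.symm i)) ⬝ᵥ (B *ᵥ (fun i => x (e.symm i))) := by
    simp only [dotProduct, mulVec, submatrix_apply, Pi.star_apply]
    refine Fintype.sum_equiv e
      (fun i => star (x i) * ∑ j, B (e i) (e j) * x j)
      (fun i' => star (x (e.symm i')) * ∑ j', B i' j' * x (e.symm j')) fun i => ?_
    simp only [Equiv.symm_apply_apply]
    congr 1
    refine Fintype.sum_equiv e (fun j => B (e i) (e j) * x j)
      (fun j' => B (e i) j' * x (e.symm j')) fun j => ?_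
    simp only [Equiv.symm_apply_apply]
  exact ⟨r, by rw [key, h1], by rw [← hns]; exact h2, by rw [← hns]; exact h3⟩

lemma QF.kroneckerOne {B : Matrix κ₁ κ₁ ℂ} {α β : ℝ} (h : QF B α β) :
    QF (B ⊗ₖ (1 : Matrix κ₂ κ₂ ℂ)) α β := by
  intro x
  choose r h1 h2 h3 using fun i : κ₂ => h (fun p => x (p, i))
  have hnsx : ns x = ∑ i, ns (fun p => x (p, i)) := by
    unfold ns
    rw [Fintype.sum_prod_type, Finset.sum_comm]
  have key : star x ⬝ᵥ ((B ⊗ₖ (1 : Matrix κ₂ κ₂ ℂ)) *ᵥ x)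
      = ∑ i, star (fun p => x (p, i)) ⬝ᵥ (B *ᵥ (fun p => x (p, i))) := by
    simp only [dotProduct, mulVec, Pi.star_apply, kroneckerMap_apply, one_apply]
    rw [Fintype.sum_prod_type, Finset.sum_comm]
    refine Finset.sum_congr rfl fun i _ => Finset.sum_congr rfl fun p _ => ?_
    congr 1
    rw [Fintype.sum_prod_type, Finset.sum_comm]
    rw [Finset.sum_eq_single i]
    · refine Finset.sum_congr rfl fun q _ => by simp
    · intro i' _ hne
      apply Finset.sum_eq_zero
      intro q _
      simp [Ne.symm hne]
    · intro hmem
      exact absurd (Finset.mem_univ i) hmem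
  refine ⟨∑ i, r i, ?_, ?_, ?_⟩
  · rw [key]
    push_cast
    exact Finset.sum_congr rfl fun i _ => h1 i
  · rw [hnsx, Finset.mul_sum]
    exact Finset.sum_le_sum fun i _ => h2 i
  · rw [hnsx, Finset.mul_sum]
    exact Finset.sum_le_sum fun i _ => h3 i

lemma QF.fromBlocksZero {B : Matrix κ₁ κ₁ ℂ} {α β : ℝ} (hα : α ≤ 0) (hβ : 0 ≤ β)
    (h : QF B α β) : QF (fromBlocks B 0 0 (0 : Matrix κ₂ κ₂ ℂ)) α β := by
  intro x
  obtain ⟨r, h1, h2, h3⟩ := h (fun q => x (Sum.inl q))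
  have hns : ns (fun q => x (Sum.inl q)) ≤ ns x := by
    unfold ns
    rw [Fintype.sum_sum_type]
    have : (0:ℝ) ≤ ∑ j : κ₂, Complex.normSq (x (Sum.inr j)) :=
      Finset.sum_nonneg fun _ _ => Complex.normSq_nonneg _
    linarith
  have key : star x ⬝ᵥ (fromBlocks B 0 0 (0 : Matrix κ₂ κ₂ ℂ) *ᵥ x)
      = star (fun q => x (Sum.inl q)) ⬝ᵥ (B *ᵥ (fun q => x (Sum.inl q))) := by
    simp only [dotProduct, mulVec, Pi.star_apply]
    rw [Fintype.sum_sum_type]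
    have hz : ∀ j : κ₂, star (x (Sum.inr j)) *
        (∑ y, fromBlocks B 0 0 (0 : Matrix κ₂ κ₂ ℂ) (Sum.inr j) y * x y) = 0 := by
      intro j
      have : ∀ y, fromBlocks B 0 0 (0 : Matrix κ₂ κ₂ ℂ) (Sum.inr j) y * x y = 0 := by
        intro y; cases y <;> simp [fromBlocks]
      rw [Finset.sum_congr rfl fun y _ => this y]
      simp
    rw [Finset.sum_congr rfl fun j _ => hz j]
    simp only [Finset.sum_const_zero, add_zero]
    refine Finset.sum_congr rfl fun q _ => ?_
    congr 1
    rw [Fintype.sum_sum_type]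
    have : ∀ j : κ₂, fromBlocks B 0 0 (0 : Matrix κ₂ κ₂ ℂ) (Sum.inl q) (Sum.inr j) * x (Sum.inr j) = 0 := by
      intro j; simp [fromBlocks]
    rw [Finset.sum_congr rfl fun j _ => this j]
    simp [fromBlocks, dotProduct]
  refine ⟨r, by rw [key, h1], ?_, ?_⟩
  · calc α * ns x ≤ α * ns (fun q => x (Sum.inl q)) :=
        mul_le_mul_of_nonpos_left hns hα
    _ ≤ r := h2
  · calc r ≤ β * ns (fun q => x (Sum.inl q)) := h3
    _ ≤ β * ns x := mul_le_mul_of_nonneg_left hns hβ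

lemma QF.avg {B B' : Matrix κ κ ℂ} {α β : ℝ} (h : QF B α β) (h' : QF B' α β) :
    QF ((1/2 : ℝ) • B + (1 - 1/2 : ℝ) • B') α β := by
  intro x
  obtain ⟨r, h1, h2, h3⟩ := h x
  obtain ⟨r', h1', h2', h3'⟩ := h' x
  refine ⟨(1/2 : ℝ) * r + (1 - 1/2 : ℝ) * r', ?_, by nlinarith [ns_nonneg x], by nlinarith [ns_nonneg x]⟩
  rw [add_mulVec, smul_mulVec, smul_mulVec, dotProduct_add, dotProduct_smul,
    dotProduct_smul, h1, h1']
  push_cast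
  simp [smul_eq_mul]

lemma pow_semiconj {M : Matrix κ₁ κ₁ ℂ} {N : Matrix κ₂ κ₂ ℂ} {C : Matrix κ₁ κ₂ ℂ}
    (h : M * C = C * N) : ∀ k : ℕ, M ^ k * C = C * N ^ k
  | 0 => by simp
  | (k+1) => by
      rw [pow_succ, pow_succ, Matrix.mul_assoc, h, ← Matrix.mul_assoc,
        pow_semiconj h k, Matrix.mul_assoc]

lemma aeval_semiconj {M : Matrix κ₁ κ₁ ℂ} {N : Matrix κ₂ κ₂ ℂ} {C : Matrix κ₁ κ₂ ℂ}
    (h : M * C = C * N) (p : ℝ[X]) : aeval M p * C = C * aeval N p := by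
  induction p using Polynomial.induction_on' with
  | add p q hp hq => rw [map_add, map_add, Matrix.add_mul, Matrix.mul_add, hp, hq]
  | monomial k d =>
      rw [aeval_monomial, aeval_monomial, Algebra.algebraMap_eq_smul_one,
        Algebra.algebraMap_eq_smul_one, smul_mul_assoc, smul_mul_assoc, one_mul, one_mul,
        Matrix.smul_mul, pow_semiconj h k, Matrix.mul_smul]

lemma aeval_diagonal (d : κ → ℂ) (p : ℝ[X]) :
    aeval (diagonal d) p = diagonal (fun i => aeval (d i) p) := by
  have h1 : aeval ((Matrix.diagonalAlgHom (n := κ) ℝ) d) p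
      = (Matrix.diagonalAlgHom (n := κ) ℝ) (aeval d p) :=
    Polynomial.aeval_algHom_apply _ d p
  simp only [Matrix.diagonalAlgHom_apply] at h1
  rw [h1, show ((aeval d) p) = (fun i => aeval (d i) p) from funext fun i => by
    have h2 := Polynomial.aeval_algHom_apply (Pi.evalAlgHom ℝ (fun _ : κ => ℂ) i) d p
    simpa using h2.symm]

lemma aeval_ofReal (r : ℝ) (p : ℝ[X]) : aeval ((r : ℂ)) p = ((p.eval r : ℝ) : ℂ) := by
  rw [show ((r:ℂ)) = Complex.ofRealAm r from rfl, Polynomial.aeval_algHom_apply]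
  simp

lemma matFun_eq_aeval {A : Matrix κ κ ℂ} (hA : A.IsHermitian) (g : ℝ → ℝ) (p : ℝ[X])
    (hp : ∀ i, p.eval (hA.eigenvalues i) = g (hA.eigenvalues i)) :
    matFun hA g = aeval A p := by
  have hU1 : star (hA.eigenvectorUnitary : Matrix κ κ ℂ) * (hA.eigenvectorUnitary : Matrix κ κ ℂ) = 1 :=
    Unitary.star_mul_self_of_mem (SetLike.coe_mem _)
  have hU2 : (hA.eigenvectorUnitary : Matrix κ κ ℂ) * star (hA.eigenvectorUnitary : Matrix κ κ ℂ) = 1 :=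
    Unitary.mul_star_self_of_mem (SetLike.coe_mem _)
  set U : Matrix κ κ ℂ := (hA.eigenvectorUnitary : Matrix κ κ ℂ) with hUdef
  set D : Matrix κ κ ℂ := diagonal (RCLike.ofReal ∘ hA.eigenvalues) with hDdef
  have hsemi : (U * D * star U) * U = U * D := by rw [mul_assoc, hU1, mul_one]
  have e2 : aeval (U * D * star U) p = U * aeval D p * star U := by
    calc aeval (U * D * star U) p = aeval (U * D * star U) p * (U * star U) := by
          rw [hU2, mul_one]
    _ = (aeval (U * D * star U) p * U) * star U := (mul_assoc _ _ _).symm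
    _ = U * aeval D p * star U := by rw [aeval_semiconj hsemi p]
  have e3 : aeval A p = U * aeval D p * star U := by
    conv_lhs => rw [hA.spectral_theorem, Unitary.conjStarAlgAut_apply]
    exact e2
  have e4 : aeval D p = diagonal (RCLike.ofReal ∘ g ∘ hA.eigenvalues) := by
    rw [hDdef, aeval_diagonal]
    refine congrArg diagonal (funext fun i => ?_)
    simp only [Function.comp_apply]
    rw [show (RCLike.ofReal (hA.eigenvalues i) : ℂ) = ((hA.eigenvalues i : ℝ) : ℂ) from rfl,
      aeval_ofReal, hp i]
    rfl
  rw [e3, e4]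
  rfl

lemma trace_nonneg_of_posSemidef {M : Matrix κ κ ℂ} (h : M.PosSemidef) : 0 ≤ M.trace := by
  rw [Matrix.trace]
  apply Finset.sum_nonneg
  intro i _
  have h2 := h.dotProduct_mulVec_nonneg (Pi.single i 1)
  have h3 : star (Pi.single i (1:ℂ)) ⬝ᵥ (M *ᵥ Pi.single i 1) = M i i := by
    simp only [dotProduct, mulVec, Pi.star_apply, Pi.single_apply]
    rw [Finset.sum_eq_single i]
    · simp [dotProduct, Pi.single_apply]
    · intro j _ hne; simp [hne]
    · intro hmem; exact absurd (Finset.mem_univ i) hmem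
  rw [h3] at h2
  exact h2

lemma psd_real_smul_one (r : ℝ) (hr : 0 ≤ r) :
    (((r : ℝ) : ℂ) • (1 : Matrix κ κ ℂ)).PosSemidef := by
  have h1 : ((r : ℂ) • (1 : Matrix κ κ ℂ)) = diagonal (fun _ => (r : ℂ)) := by
    ext i j
    by_cases hij : i = j <;> simp [Matrix.one_apply, Matrix.diagonal_apply, hij]
  rw [h1]
  refine PosSemidef.diagonal (fun i => ?_)
  simpa using (show (0:ℂ) ≤ (r:ℂ) by exact_mod_cast hr)

lemma real_smul_eq (r : ℝ) {ι₁ ι₂ : Type*} (M : Matrix ι₁ ι₂ ℂ) : r • M = ((r:ℝ):ℂ) • M := by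
  ext i j
  simp [Complex.real_smul]

lemma aeval_zero_matrix (p : ℝ[X]) :
    aeval (0 : Matrix κ κ ℂ) p = algebraMap ℝ (Matrix κ κ ℂ) (p.eval 0) := by
  rw [Polynomial.aeval_def, Polynomial.eval₂_at_zero, Polynomial.coeff_zero_eq_eval_zero]

lemma pow_fromBlocks (A : Matrix κ₁ κ₁ ℂ) (B : Matrix κ₂ κ₂ ℂ) :
    ∀ k : ℕ, (fromBlocks A 0 0 B) ^ k = fromBlocks (A ^ k) 0 0 (B ^ k)
  | 0 => by simp [fromBlocks_one]
  | (k+1) => by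
      rw [pow_succ, pow_fromBlocks A B k, fromBlocks_multiply]
      simp [pow_succ]

lemma smul_fromBlocks' (r : ℂ) (A : Matrix κ₁ κ₁ ℂ) (B : Matrix κ₂ κ₂ ℂ) :
    r • fromBlocks A 0 0 B = fromBlocks (r • A) 0 0 (r • B) := by
  ext i j
  cases i <;> cases j <;> simp [fromBlocks]

lemma aeval_fromBlocks (A : Matrix κ₁ κ₁ ℂ) (B : Matrix κ₂ κ₂ ℂ) (p : ℝ[X]) :
    aeval (fromBlocks A 0 0 B) p = fromBlocks (aeval A p) 0 0 (aeval B p) := by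
  induction p using Polynomial.induction_on' with
  | add p q hp hq => rw [map_add, hp, hq, map_add, map_add, fromBlocks_add]; simp
  | monomial k d =>
      simp only [aeval_monomial, pow_fromBlocks, Algebra.algebraMap_eq_smul_one,
        smul_mul_assoc, one_mul]
      rw [real_smul_eq, real_smul_eq, real_smul_eq, smul_fromBlocks']

lemma aeval_kroneckerOne (A : Matrix κ₁ κ₁ ℂ) (p : ℝ[X]) :
    aeval (A ⊗ₖ (1 : Matrix κ₂ κ₂ ℂ)) p = (aeval A p) ⊗ₖ (1 : Matrix κ₂ κ₂ ℂ) := by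
  have hpow : ∀ k : ℕ, (A ⊗ₖ (1 : Matrix κ₂ κ₂ ℂ)) ^ k = (A ^ k) ⊗ₖ (1 : Matrix κ₂ κ₂ ℂ) := by
    intro k
    induction k with
    | zero => simp [one_kronecker_one]
    | succ k ih => rw [pow_succ, ih, pow_succ, ← mul_kronecker_mul, one_mul]
  induction p using Polynomial.induction_on' with
  | add p q hp hq => rw [map_add, hp, hq, map_add, add_kronecker]
  | monomial k d =>
      simp only [aeval_monomial, hpow, Algebra.algebraMap_eq_smul_one, smul_mul_assoc, one_mul]
      rw [smul_kronecker]

noncomputable def psdSqrt (A : Matrix κ κ ℂ) : Matrix κ κ ℂ := by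
  open scoped MatrixOrder in exact CFC.sqrt A

lemma psdSqrt_mul_self {A : Matrix κ κ ℂ} (hA : A.PosSemidef) : psdSqrt A * psdSqrt A = A := by
  unfold psdSqrt
  open scoped MatrixOrder in exact CFC.sqrt_mul_sqrt_self A hA.nonneg

lemma psdSqrt_conjTranspose (A : Matrix κ κ ℂ) : (psdSqrt A)ᴴ = psdSqrt A := by
  unfold psdSqrt
  open scoped MatrixOrder in exact (CFC.sqrt_nonneg A).posSemidef.isHermitian



section CompLemmas
variable {n m : ℕ}
open scoped Kronecker


variable {n m : ℕ}

lemma sum_rot {M : Type*} [AddCommMonoid M] {ι₁ ι₂ ι₃ : Type*} [Fintype ι₁] [Fintype ι₂]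
    [Fintype ι₃] (F : ι₁ → ι₂ → ι₃ → M) :
    ∑ i, ∑ q, ∑ p, F i q p = ∑ p, ∑ q, ∑ i, F i q p :=
  calc ∑ i, ∑ q, ∑ p, F i q p = ∑ q, ∑ i, ∑ p, F i q p := Finset.sum_comm
    _ = ∑ q, ∑ p, ∑ i, F i q p := Finset.sum_congr rfl fun _ _ => Finset.sum_comm
    _ = ∑ p, ∑ q, ∑ i, F i q p := Finset.sum_comm

lemma ptrace1_entry (C A : Matrix (Fin n) (Fin n) ℂ)
    (X : Matrix (Fin n × Fin m) (Fin n × Fin m) ℂ) :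
    ptrace1 (tensorOne C * X * tensorOne A)
      = Matrix.of (fun j l => ∑ p, ∑ q, (∑ i, A q i * C i p) * X (p, j) (q, l)) := by
  ext j l
  simp only [ptrace1, of_apply, mul_apply, tensorOne, Fintype.sum_prod_type,
    mul_ite, ite_mul, mul_one, one_mul, mul_zero, zero_mul,
    Finset.sum_ite_eq, Finset.sum_ite_eq', Finset.mem_univ, if_true, Finset.sum_mul,
    Finset.mul_sum]
  rw [sum_rot (fun i q p => C i p * X (p, j) (q, l) * A q i)]
  exact Finset.sum_congr rfl fun p _ => Finset.sum_congr rfl fun q _ =>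
    Finset.sum_congr rfl fun i _ => by ring

lemma sum_comm4 {M : Type*} [AddCommMonoid M] {ι₁ ι₂ ι₃ ι₄ : Type*} [Fintype ι₁] [Fintype ι₂]
    [Fintype ι₃] [Fintype ι₄] (F : ι₁ → ι₂ → ι₃ → ι₄ → M) :
    ∑ i, ∑ j, ∑ p, ∑ q, F i j p q = ∑ p, ∑ q, ∑ i, ∑ j, F i j p q :=
  calc ∑ i, ∑ j, ∑ p, ∑ q, F i j p q
      = ∑ i, ∑ p, ∑ j, ∑ q, F i j p q := Finset.sum_congr rfl fun _ _ => Finset.sum_comm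
    _ = ∑ p, ∑ i, ∑ j, ∑ q, F i j p q := Finset.sum_comm
    _ = ∑ p, ∑ i, ∑ q, ∑ j, F i j p q :=
        Finset.sum_congr rfl fun _ _ => Finset.sum_congr rfl fun _ _ => Finset.sum_comm
    _ = ∑ p, ∑ q, ∑ i, ∑ j, F i j p q := Finset.sum_congr rfl fun _ _ => Finset.sum_comm

lemma tensorOne_mul (A B : Matrix (Fin n) (Fin n) ℂ) :
    tensorOne (m := m) A * tensorOne B = tensorOne (A * B) := by
  ext x y
  obtain ⟨i, j⟩ := x
  obtain ⟨k, l⟩ := y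
  simp only [tensorOne, mul_apply, of_apply, Fintype.sum_prod_type,
    mul_ite, ite_mul, mul_one, one_mul, mul_zero, zero_mul,
    Finset.sum_ite_eq, Finset.sum_ite_eq', Finset.mem_univ, if_true, Finset.sum_mul,
    Finset.mul_sum]
  by_cases h : j = l <;> simp [h]

lemma Vconj_entry (g : Matrix (Fin n) (Fin n) ℂ) (X : Matrix (Fin n × Fin m) (Fin n × Fin m) ℂ) :
    (Matrix.of (fun (q : (Fin n × Fin m) × Fin n) (j : Fin m) =>
        g q.1.1 q.2 * (if q.1.2 = j then 1 else 0)))ᴴ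
      * (X ⊗ₖ (1 : Matrix (Fin n) (Fin n) ℂ))
      * (Matrix.of (fun (q : (Fin n × Fin m) × Fin n) (j : Fin m) =>
        g q.1.1 q.2 * (if q.1.2 = j then 1 else 0)))
    = Matrix.of (fun j l => ∑ p, ∑ q, (∑ i, g q i * star (g p i)) * X (p, j) (q, l)) := by
  ext j l
  simp only [mul_apply, of_apply, conjTranspose_apply, kroneckerMap_apply, one_apply,
    Fintype.sum_prod_type, star_mul', star_one, star_zero, apply_ite (star : ℂ → ℂ),
    mul_ite, ite_mul, mul_one, one_mul, mul_zero, zero_mul,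
    Finset.sum_ite_eq, Finset.sum_ite_eq', Finset.mem_univ, if_true, Finset.sum_mul,
    Finset.mul_sum]
  have h1 : ∀ x : Fin n, (∑ x₁ : Fin m, ∑ x₂ : Fin n, if x₁ = l then
        (∑ x₃ : Fin n, star (g x₃ x₂) * X (x₃, j) (x, x₁) * g x x₂) else 0)
      = ∑ x₂ : Fin n, ∑ x₃ : Fin n, star (g x₃ x₂) * X (x₃, j) (x, l) * g x x₂ := by
    intro x
    rw [Finset.sum_comm]
    refine Finset.sum_congr rfl fun x₂ _ => ?_
    rw [Finset.sum_ite_eq' Finset.univ l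
      (fun x₁ => ∑ x₃ : Fin n, star (g x₃ x₂) * X (x₃, j) (x, x₁) * g x x₂)]
    simp
  rw [Finset.sum_congr rfl fun x _ => h1 x]
  rw [sum_rot (fun q i p => star (g p i) * X (p, j) (q, l) * g q i)]
  refine Finset.sum_congr rfl fun p _ => ?_
  rw [Finset.sum_comm]
  exact Finset.sum_congr rfl fun q _ => Finset.sum_congr rfl fun i _ => by ring

lemma trace_slice_aux (d₂ : Matrix (Fin m) (Fin m) ℂ) (E : Matrix (Fin n) (Fin n) ℂ)
    (F : Matrix (Fin n × Fin m) (Fin n × Fin m) ℂ) :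
    (d₂ * Matrix.of (fun j l => ∑ p, ∑ q, E q p * F (p, j) (q, l))).trace
      = (ptrace2 (oneTensor d₂ * F) * E).trace := by
  simp only [Matrix.trace, Matrix.diag, mul_apply, of_apply, ptrace2, oneTensor,
    Fintype.sum_prod_type, mul_ite, ite_mul, mul_one, one_mul, mul_zero, zero_mul,
    Finset.sum_ite_eq, Finset.sum_ite_eq', Finset.mem_univ, if_true, Finset.sum_mul,
    Finset.mul_sum]
  have h2 : ∀ (x x₁ : Fin n) (x₂ : Fin m),
      (∑ x₃ : Fin n, ∑ x₄ : Fin m, if x = x₃ then d₂ x₂ x₄ * F (x₃, x₄) (x₁, x₂) * E x₁ x else 0)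
      = ∑ x₄ : Fin m, d₂ x₂ x₄ * F (x, x₄) (x₁, x₂) * E x₁ x := by
    intro x x₁ x₂
    have h3 : ∀ x₃ : Fin n, (∑ x₄ : Fin m,
        if x = x₃ then d₂ x₂ x₄ * F (x₃, x₄) (x₁, x₂) * E x₁ x else 0)
        = if x = x₃ then (∑ x₄ : Fin m, d₂ x₂ x₄ * F (x₃, x₄) (x₁, x₂) * E x₁ x) else 0 := by
      intro x₃; split <;> simp
    rw [Finset.sum_congr rfl fun x₃ _ => h3 x₃, Finset.sum_ite_eq Finset.univ x
      (fun x₃ => ∑ x₄ : Fin m, d₂ x₂ x₄ * F (x₃, x₄) (x₁, x₂) * E x₁ x)]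
    simp
  rw [Finset.sum_congr rfl fun x _ => Finset.sum_congr rfl fun x₁ _ =>
    Finset.sum_congr rfl fun x₂ _ => h2 x x₁ x₂]
  rw [sum_comm4 (fun l j p q => d₂ l j * (E q p * F (p, j) (q, l)))]
  refine Finset.sum_congr rfl fun p _ => Finset.sum_congr rfl fun q _ => ?_
  refine Finset.sum_congr rfl fun l _ => Finset.sum_congr rfl fun j _ => by ring

lemma kroneckerOne_isHermitian {H : Matrix (Fin n × Fin m) (Fin n × Fin m) ℂ}
    (hH : H.IsHermitian) (k : ℕ) : (H ⊗ₖ (1 : Matrix (Fin k) (Fin k) ℂ)).IsHermitian := by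
  show _ᴴ = _
  ext x y
  simp only [conjTranspose_apply, kroneckerMap_apply, one_apply, star_mul',
    apply_ite (star : ℂ → ℂ), star_one, star_zero]
  rw [← conjTranspose_apply, hH.eq]
  by_cases hxy : y.2 = x.2
  · simp [hxy]
  · rw [if_neg (show ¬ x.2 = y.2 from fun h => hxy h.symm), if_neg hxy]

lemma Vstar_V (g : Matrix (Fin n) (Fin n) ℂ) :
    (Matrix.of (fun (q : (Fin n × Fin m) × Fin n) (j : Fin m) =>
        g q.1.1 q.2 * (if q.1.2 = j then 1 else 0)))ᴴ
      * (Matrix.of (fun (q : (Fin n × Fin m) × Fin n) (j : Fin m) =>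
        g q.1.1 q.2 * (if q.1.2 = j then 1 else 0)))
    = (∑ q : Fin n, ∑ i : Fin n, star (g q i) * g q i) • (1 : Matrix (Fin m) (Fin m) ℂ) := by
  ext j l
  simp only [mul_apply, conjTranspose_apply, of_apply, Fintype.sum_prod_type, star_mul',
    apply_ite (star : ℂ → ℂ), star_one, star_zero, mul_ite, ite_mul, mul_one, one_mul,
    mul_zero, zero_mul, Finset.sum_ite_eq, Finset.sum_ite_eq', Finset.mem_univ, if_true,
    Matrix.smul_apply, one_apply, smul_eq_mul]
  have h1 : ∀ x : Fin n, (∑ x₁ : Fin m, ∑ x₂ : Fin n,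
      if x₁ = l then if x₁ = j then star (g x x₂) * g x x₂ else 0 else 0)
      = if j = l then ∑ x₂ : Fin n, star (g x x₂) * g x x₂ else 0 := by
    intro x
    rw [Finset.sum_congr rfl (fun x₁ _ => show (∑ x₂ : Fin n,
      if x₁ = l then if x₁ = j then star (g x x₂) * g x x₂ else 0 else 0)
      = if x₁ = l then if x₁ = j then ∑ x₂ : Fin n, star (g x x₂) * g x x₂ else 0 else 0 by
        split <;> simp)]
    rw [Finset.sum_ite_eq' Finset.univ l
      (fun x₁ => if x₁ = j then ∑ x₂ : Fin n, star (g x x₂) * g x x₂ else 0)]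
    simp only [Finset.mem_univ, if_true]
    by_cases h : j = l
    · simp [h]
    · rw [if_neg (fun hh => h hh.symm), if_neg h]
  rw [Finset.sum_congr rfl fun x _ => h1 x]
  by_cases h : j = l
  · simp [h]
  · simp [h]

lemma fromBlocks_isHermitian {κ₁ κ₂ : Type*} [Fintype κ₁] [DecidableEq κ₁] [Fintype κ₂]
    [DecidableEq κ₂] {A : Matrix κ₁ κ₁ ℂ} (hA : A.IsHermitian) :
    (fromBlocks A 0 0 (0 : Matrix κ₂ κ₂ ℂ)).IsHermitian := by
  show _ᴴ = _
  ext x y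
  rcases x with i | i <;> rcases y with j | j <;>
    simp only [conjTranspose_apply, fromBlocks_apply₁₁, fromBlocks_apply₁₂,
      fromBlocks_apply₂₁, fromBlocks_apply₂₂, star_zero, Matrix.zero_apply]
  rw [← conjTranspose_apply, hA.eq]

end CompLemmas
end JensenAux

set_option maxHeartbeats 3000000 in
open Polynomial JensenAux in
open scoped Kronecker in
/-- **Jensen's inequality for slice maps of faithful states (non-tracial case).**
Let `d₁, d₂` be positive definite matrices of trace `1` (the densities of faithful states
`ρᵢ = Tr(dᵢ ·)`), let `a` be a contraction (`a* a ≤ 1`), let `I` be an interval containing `0`,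
and let `f` be operator convex on `I` with `f(0) ≤ 0` (meaning: for all `k ≥ 1`, Hermitian
`k×k` matrices `u, v` with eigenvalues in `I` and `t ∈ [0,1]`, one has
`f(t•u + (1-t)•v) ≤ t•f(u) + (1-t)•f(v)` in the Loewner order). If `H` is Hermitian on
`ℂⁿ ⊗ ℂᵐ` with all eigenvalues in `I`, then `K = Tr₁((d₁ ⊗ 1)(a* ⊗ 1) H (a ⊗ 1))` is Hermitian
with all eigenvalues in `I`, and `Tr(d₂ f(K)) ≤ Tr(d₁ a* Tr₂((1 ⊗ d₂) f(H)) a)`. -/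
theorem jensen_slice_maps_states {n m : ℕ} (hn : 1 ≤ n) (hm : 1 ≤ m)
    {d₁ : Matrix (Fin n) (Fin n) ℂ} (hd₁ : d₁.PosDef) (hd₁tr : d₁.trace = 1)
    {d₂ : Matrix (Fin m) (Fin m) ℂ} (hd₂ : d₂.PosDef) (hd₂tr : d₂.trace = 1)
    (a : Matrix (Fin n) (Fin n) ℂ) (ha : (1 - aᴴ * a).PosSemidef)
    (I : Set ℝ) (hI : I.OrdConnected) (h0I : (0 : ℝ) ∈ I)
    (f : ℝ → ℝ) (hf0 : f 0 ≤ 0)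
    (hopconv : ∀ (k : ℕ), 1 ≤ k → ∀ {u v : Matrix (Fin k) (Fin k) ℂ}
      (hu : u.IsHermitian) (hv : v.IsHermitian),
      (∀ i, hu.eigenvalues i ∈ I) → (∀ i, hv.eigenvalues i ∈ I) →
      ∀ t : ℝ, t ∈ Set.Icc (0 : ℝ) 1 → ∀ (huv : (t • u + (1 - t) • v).IsHermitian),
        (t • matFun hu f + (1 - t) • matFun hv f - matFun huv f).PosSemidef)
    {H : Matrix (Fin n × Fin m) (Fin n × Fin m) ℂ} (hH : H.IsHermitian)
    (hspec : ∀ i, hH.eigenvalues i ∈ I) :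
    ∃ hK : (ptrace1 (tensorOne d₁ * tensorOne aᴴ * H * tensorOne a)).IsHermitian,
      (∀ j, hK.eigenvalues j ∈ I) ∧
        (d₂ * matFun hK f).trace ≤
          (d₁ * aᴴ * ptrace2 (oneTensor d₂ * matFun hH f) * a).trace := by
  classical
  haveI hNn : Nonempty (Fin n) := ⟨⟨0, hn⟩⟩
  haveI hNm : Nonempty (Fin m) := ⟨⟨0, hm⟩⟩
  -- square root of d₁ and the contraction g
  set b : Matrix (Fin n) (Fin n) ℂ := psdSqrt d₁ with hbdef
  have hbb : b * b = d₁ := psdSqrt_mul_self hd₁.posSemidef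
  have hbH : bᴴ = b := psdSqrt_conjTranspose d₁
  set g : Matrix (Fin n) (Fin n) ℂ := a * b with hgdef
  have hgH : gᴴ = b * aᴴ := by rw [hgdef, conjTranspose_mul, hbH]
  have hggH : g * gᴴ = a * (d₁ * aᴴ) := by
    rw [hgH, hgdef, mul_assoc a b (b * aᴴ), ← mul_assoc b b aᴴ, hbb]
  set c : ℝ := ∑ q : Fin n, ∑ i : Fin n, Complex.normSq (g q i) with hcdef
  have hc0 : (0:ℝ) ≤ c :=
    Finset.sum_nonneg fun _ _ => Finset.sum_nonneg fun _ _ => Complex.normSq_nonneg _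
  have hcC : ((c:ℝ):ℂ) = ∑ q : Fin n, ∑ i : Fin n, star (g q i) * g q i := by
    rw [hcdef]
    push_cast
    exact Finset.sum_congr rfl fun q _ => Finset.sum_congr rfl fun i _ =>
      (star_mul_self_eq _).symm
  have htr : (gᴴ * g).trace = ((c:ℝ):ℂ) := by
    have h1 : (gᴴ * g).trace = ∑ i : Fin n, ∑ q : Fin n, star (g q i) * g q i := by
      rw [Matrix.trace]
      refine Finset.sum_congr rfl fun i _ => ?_
      simp [Matrix.diag, mul_apply, conjTranspose_apply]
    rw [h1, hcC, Finset.sum_comm]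
  have hc1 : c ≤ 1 := by
    have hpsd : (bᴴ * (1 - aᴴ * a) * b).PosSemidef := ha.conjTranspose_mul_mul_same b
    have h0 := trace_nonneg_of_posSemidef hpsd
    have h2 : bᴴ * (1 - aᴴ * a) * b = d₁ - gᴴ * g := by
      rw [hbH, Matrix.mul_sub, Matrix.sub_mul, mul_one, hbb, hgH, hgdef]
      congr 1
      simp only [Matrix.mul_assoc]
    rw [h2, trace_sub, hd₁tr, htr] at h0
    have h3 : ((c:ℝ):ℂ) ≤ 1 := sub_nonneg.mp h0
    exact_mod_cast h3
  set s : ℝ := Real.sqrt (1 - c) with hsdef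
  have hs2 : s * s = 1 - c := Real.mul_self_sqrt (by linarith)
  -- the matrices
  set X₁ : Matrix ((Fin n × Fin m) × Fin n) ((Fin n × Fin m) × Fin n) ℂ
    := H ⊗ₖ (1 : Matrix (Fin n) (Fin n) ℂ) with hX₁def
  set V : Matrix ((Fin n × Fin m) × Fin n) (Fin m) ℂ :=
    Matrix.of (fun (q : (Fin n × Fin m) × Fin n) (j : Fin m) =>
      g q.1.1 q.2 * (if q.1.2 = j then 1 else 0)) with hVdef
  set W : Matrix (((Fin n × Fin m) × Fin n) ⊕ Fin m) (Fin m) ℂ :=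
    fromRows V (((s:ℝ):ℂ) • 1) with hWdef
  have hVV : Vᴴ * V = ((c:ℝ):ℂ) • 1 := by
    rw [hVdef, Vstar_V g, ← hcC]
  have hWW : Wᴴ * W = 1 := by
    rw [hWdef, conjTranspose_fromRows_eq_fromCols_conjTranspose, fromCols_mul_fromRows,
      hVV]
    have h4 : (((s:ℝ):ℂ) • (1:Matrix (Fin m) (Fin m) ℂ))ᴴ * (((s:ℝ):ℂ) • 1)
        = (((1-c:ℝ)):ℂ) • 1 := by
      rw [conjTranspose_smul, conjTranspose_one, Complex.star_def, Complex.conj_ofReal,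
        smul_mul_assoc, Matrix.mul_smul, Matrix.one_mul, smul_smul, ← Complex.ofReal_mul, hs2]
    rw [h4, ← add_smul]
    have h5 : ((c:ℝ):ℂ) + (((1-c:ℝ)):ℂ) = 1 := by push_cast; ring
    rw [h5, one_smul]
  have hPP2 : (W * Wᴴ) * (W * Wᴴ) = W * Wᴴ := by
    rw [Matrix.mul_assoc, ← Matrix.mul_assoc Wᴴ W Wᴴ, hWW, Matrix.one_mul]
  set S : Matrix (((Fin n × Fin m) × Fin n) ⊕ Fin m) (((Fin n × Fin m) × Fin n) ⊕ Fin m) ℂ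
    := 1 - W * Wᴴ - W * Wᴴ with hSdef
  have hSH : Sᴴ = S := by
    rw [hSdef, conjTranspose_sub, conjTranspose_sub, conjTranspose_one, conjTranspose_mul,
      conjTranspose_conjTranspose]
  have hSS : S * S = 1 := by
    rw [hSdef]
    simp only [Matrix.sub_mul, Matrix.mul_sub, Matrix.one_mul, Matrix.mul_one, hPP2]
    abel
  have hSW : S * W = -W := by
    rw [hSdef]
    simp only [Matrix.sub_mul, Matrix.one_mul, Matrix.mul_assoc, hWW, Matrix.mul_one]
    abel
  set Y : Matrix (((Fin n × Fin m) × Fin n) ⊕ Fin m) (((Fin n × Fin m) × Fin n) ⊕ Fin m) ℂ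
    := fromBlocks X₁ 0 0 0 with hYdef
  have hX₁H : X₁.IsHermitian := by rw [hX₁def]; exact kroneckerOne_isHermitian hH n
  have hYH : Y.IsHermitian := by rw [hYdef]; exact fromBlocks_isHermitian hX₁H
  have hSYSH : (S * Y * S).IsHermitian := by
    show _ᴴ = _
    rw [conjTranspose_mul, conjTranspose_mul, hSH, hYH.eq, Matrix.mul_assoc]
  -- spectra bounds
  set α : ℝ := min 0 (Finset.univ.inf' Finset.univ_nonempty hH.eigenvalues) with hαdef
  set β : ℝ := max 0 (Finset.univ.sup' Finset.univ_nonempty hH.eigenvalues) with hβdef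
  have hα0 : α ≤ 0 := min_le_left _ _
  have hβ0 : 0 ≤ β := le_max_left _ _
  have hαI : α ∈ I := by
    rw [hαdef]
    rcases le_total 0 (Finset.univ.inf' Finset.univ_nonempty hH.eigenvalues) with h | h
    · rwa [min_eq_left h]
    · rw [min_eq_right h]
      obtain ⟨i, _, hi⟩ := Finset.exists_mem_eq_inf' Finset.univ_nonempty hH.eigenvalues
      rw [hi]; exact hspec i
  have hβI : β ∈ I := by
    rw [hβdef]
    rcases le_total (Finset.univ.sup' Finset.univ_nonempty hH.eigenvalues) 0 with h | h
    · rwa [max_eq_left h]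
    · rw [max_eq_right h]
      obtain ⟨i, _, hi⟩ := Finset.exists_mem_eq_sup' Finset.univ_nonempty hH.eigenvalues
      rw [hi]; exact hspec i
  have hIcc : Set.Icc α β ⊆ I := hI.out hαI hβI
  have hHspec : ∀ i, hH.eigenvalues i ∈ Set.Icc α β := fun i =>
    ⟨le_trans (min_le_right _ _) (Finset.inf'_le _ (Finset.mem_univ i)),
     le_trans (Finset.le_sup' _ (Finset.mem_univ i)) (le_max_right _ _)⟩
  have hQFH : QF H α β := qf_spectral hH hHspec
  have hQFX₁ : QF X₁ α β := by rw [hX₁def]; exact hQFH.kroneckerOne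
  have hQFY : QF Y α β := by rw [hYdef]; exact hQFX₁.fromBlocksZero hα0 hβ0
  have hQFSYS : QF (S * Y * S) α β := by
    have h6 := hQFY.conjIso S (by rw [hSH, hSS])
    rwa [hSH] at h6
  set Mm : Matrix (((Fin n × Fin m) × Fin n) ⊕ Fin m) (((Fin n × Fin m) × Fin n) ⊕ Fin m) ℂ
    := (1/2 : ℝ) • Y + (1 - 1/2 : ℝ) • (S * Y * S) with hMdef
  have hQFM : QF Mm α β := by rw [hMdef]; exact hQFY.avg hQFSYS
  have hMH : Mm.IsHermitian := by
    rw [hMdef]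
    show _ᴴ = _
    rw [conjTranspose_add, conjTranspose_smul, conjTranspose_smul, hYH.eq, hSYSH.eq]
    simp
  -- K
  have hKeq : ptrace1 (tensorOne d₁ * tensorOne aᴴ * H * tensorOne a) = Vᴴ * X₁ * V := by
    rw [hX₁def, hVdef, Vconj_entry g H, tensorOne_mul, ptrace1_entry (d₁ * aᴴ) a H]
    refine congrArg Matrix.of (funext fun j => funext fun l => ?_)
    refine Finset.sum_congr rfl fun p _ => Finset.sum_congr rfl fun q _ => ?_
    have h5 : (∑ i, a q i * (d₁ * aᴴ) i p) = (a * (d₁ * aᴴ)) q p := (mul_apply).symm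
    have h6 : (∑ i, g q i * star (g p i)) = (g * gᴴ) q p := by
      rw [mul_apply]
      exact Finset.sum_congr rfl fun i _ => by rw [conjTranspose_apply]
    rw [h5, h6, hggH]
  have hKH : (ptrace1 (tensorOne d₁ * tensorOne aᴴ * H * tensorOne a)).IsHermitian := by
    rw [hKeq]; exact isHermitian_conjTranspose_mul_mul V hX₁H
  have hYW : Y * W = fromRows (X₁ * V) 0 := by
    rw [hYdef, hWdef, fromBlocks_mul_fromRows]
    simp
  have hKW : Wᴴ * Y * W = Vᴴ * X₁ * V := by
    rw [Matrix.mul_assoc, hYW, hWdef, conjTranspose_fromRows_eq_fromCols_conjTranspose,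
      fromCols_mul_fromRows]
    simp [Matrix.mul_assoc]
  have hQFK : QF (Vᴴ * X₁ * V) α β := by
    rw [← hKW]; rw [show Wᴴ * Y * W = Wᴴ * Y * W from rfl]
    exact hQFY.conjIso W hWW
  have hKspec : ∀ i, hKH.eigenvalues i ∈ I := by
    intro i
    refine hIcc (eig_mem_of_QF hKH ?_ i)
    rw [hKeq]; exact hQFK
  refine ⟨hKH, hKspec, ?_⟩
  -- reindex to Fin kk
  set e := Fintype.equivFin ((((Fin n × Fin m) × Fin n) ⊕ Fin m)) with hedef
  have hkk1 : 1 ≤ Fintype.card ((((Fin n × Fin m) × Fin n) ⊕ Fin m)) := Fintype.card_pos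
  set u := Y.submatrix ⇑e.symm ⇑e.symm with hudef
  set v := (S * Y * S).submatrix ⇑e.symm ⇑e.symm with hvdef
  have hu : u.IsHermitian := hYH.submatrix ⇑e.symm
  have hv : v.IsHermitian := hSYSH.submatrix ⇑e.symm
  have hspecu : ∀ i, hu.eigenvalues i ∈ I := fun i =>
    hIcc (eig_mem_of_QF hu (hQFY.submatrix e.symm) i)
  have hspecv : ∀ i, hv.eigenvalues i ∈ I := fun i =>
    hIcc (eig_mem_of_QF hv (hQFSYS.submatrix e.symm) i)
  have hcomb : (1/2 : ℝ) • u + (1 - 1/2 : ℝ) • v = Mm.submatrix ⇑e.symm ⇑e.symm := by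
    rw [hudef, hvdef, hMdef]
    ext i j
    simp
  have huv : ((1/2 : ℝ) • u + (1 - 1/2 : ℝ) • v).IsHermitian := by
    rw [hcomb]; exact hMH.submatrix ⇑e.symm
  have ht : (1/2 : ℝ) ∈ Set.Icc (0:ℝ) 1 := by norm_num
  have hopres := hopconv _ hkk1 hu hv hspecu hspecv (1/2 : ℝ) ht huv
  -- interpolation polynomial
  set T : Finset ℝ := insert (0:ℝ)
    ((Finset.univ.image hH.eigenvalues ∪ Finset.univ.image hKH.eigenvalues
      ∪ Finset.univ.image hu.eigenvalues ∪ Finset.univ.image hv.eigenvalues)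
      ∪ Finset.univ.image huv.eigenvalues) with hTdef
  set p : Polynomial ℝ := Lagrange.interpolate T id f with hpdef
  have hpT : ∀ x ∈ T, p.eval x = f x := by
    intro x hx
    rw [hpdef]
    exact Lagrange.eval_interpolate_at_node f (Set.injOn_id _) hx
  have hp0 : p.eval 0 = f 0 := hpT 0 (by rw [hTdef]; exact Finset.mem_insert_self _ _)
  have hmemH : ∀ i, hH.eigenvalues i ∈ T := fun i => by
    rw [hTdef]
    exact Finset.mem_insert_of_mem (Finset.mem_union_left _ (Finset.mem_union_left _
      (Finset.mem_union_left _ (Finset.mem_union_left _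
        (Finset.mem_image_of_mem _ (Finset.mem_univ i))))))
  have hmemK : ∀ i, hKH.eigenvalues i ∈ T := fun i => by
    rw [hTdef]
    exact Finset.mem_insert_of_mem (Finset.mem_union_left _ (Finset.mem_union_left _
      (Finset.mem_union_left _ (Finset.mem_union_right _
        (Finset.mem_image_of_mem _ (Finset.mem_univ i))))))
  have hmemu : ∀ i, hu.eigenvalues i ∈ T := fun i => by
    rw [hTdef]
    exact Finset.mem_insert_of_mem (Finset.mem_union_left _ (Finset.mem_union_left _
      (Finset.mem_union_right _ (Finset.mem_image_of_mem _ (Finset.mem_univ i)))))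
  have hmemv : ∀ i, hv.eigenvalues i ∈ T := fun i => by
    rw [hTdef]
    exact Finset.mem_insert_of_mem (Finset.mem_union_left _
      (Finset.mem_union_right _ (Finset.mem_image_of_mem _ (Finset.mem_univ i))))
  have hmemw : ∀ i, huv.eigenvalues i ∈ T := fun i => by
    rw [hTdef]
    exact Finset.mem_insert_of_mem
      (Finset.mem_union_right _ (Finset.mem_image_of_mem _ (Finset.mem_univ i)))
  -- rewrite matFun as polynomial evaluation
  rw [matFun_eq_aeval hu f p (fun i => hpT _ (hmemu i)),
    matFun_eq_aeval hv f p (fun i => hpT _ (hmemv i)),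
    matFun_eq_aeval huv f p (fun i => hpT _ (hmemw i))] at hopres
  have haeval_sub : ∀ (N : Matrix (((Fin n × Fin m) × Fin n) ⊕ Fin m)
      (((Fin n × Fin m) × Fin n) ⊕ Fin m) ℂ),
      aeval (N.submatrix ⇑e.symm ⇑e.symm) p = (aeval N p).submatrix ⇑e.symm ⇑e.symm := by
    intro N
    have h7 := Polynomial.aeval_algHom_apply (Matrix.reindexAlgEquiv ℝ ℂ e) N p
    simpa [Matrix.reindexAlgEquiv_apply, Matrix.reindex_apply] using h7
  rw [hudef, hvdef, hcomb, haeval_sub, haeval_sub, haeval_sub] at hopres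
  have hcollect : (1/2 : ℝ) • (aeval Y p).submatrix ⇑e.symm ⇑e.symm
      + (1 - 1/2 : ℝ) • (aeval (S * Y * S) p).submatrix ⇑e.symm ⇑e.symm
      - (aeval Mm p).submatrix ⇑e.symm ⇑e.symm
      = ((1/2 : ℝ) • aeval Y p + (1 - 1/2 : ℝ) • aeval (S * Y * S) p
          - aeval Mm p).submatrix ⇑e.symm ⇑e.symm := by
    ext i j
    simp
  rw [hcollect, Matrix.posSemidef_submatrix_equiv e.symm] at hopres
  -- rewrite aeval (S*Y*S) and compress by W
  have hSYS_aeval : aeval (S * Y * S) p = S * aeval Y p * S := by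
    have hsemi : (S * Y * S) * S = S * Y := by rw [Matrix.mul_assoc (S * Y) S S, hSS, mul_one]
    calc aeval (S * Y * S) p = aeval (S * Y * S) p * (S * S) := by rw [hSS, mul_one]
      _ = (aeval (S * Y * S) p * S) * S := (mul_assoc _ _ _).symm
      _ = (S * aeval Y p) * S := by rw [aeval_semiconj hsemi p]
  rw [hSYS_aeval] at hopres
  have hcomp := hopres.conjTranspose_mul_mul_same W
  have hWS : Wᴴ * S = -Wᴴ := by
    have h8 := congrArg conjTranspose hSW
    rw [conjTranspose_mul, hSH, conjTranspose_neg] at h8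
    exact h8
  have hexp : Wᴴ * ((1/2 : ℝ) • aeval Y p + (1 - 1/2 : ℝ) • (S * aeval Y p * S)
      - aeval Mm p) * W
      = (1/2 : ℝ) • (Wᴴ * aeval Y p * W) + (1 - 1/2 : ℝ) • (Wᴴ * aeval Y p * W)
        - Wᴴ * aeval Mm p * W := by
    have h9 : Wᴴ * (S * aeval Y p * S) * W = Wᴴ * aeval Y p * W := by
      rw [show S * aeval Y p * S = S * (aeval Y p * S) from mul_assoc _ _ _,
        ← Matrix.mul_assoc Wᴴ S (aeval Y p * S), hWS]
      rw [Matrix.mul_assoc (-Wᴴ) (aeval Y p * S) W, Matrix.mul_assoc (aeval Y p) S W, hSW]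
      simp [Matrix.mul_assoc]
    simp only [Matrix.mul_sub, Matrix.sub_mul, Matrix.mul_add, Matrix.add_mul,
      Matrix.mul_smul, Matrix.smul_mul, h9]
  rw [hexp] at hcomp
  -- M * W = W * K
  have hPYW : (W * Wᴴ) * (Y * W) = W * (Vᴴ * X₁ * V) := by
    rw [Matrix.mul_assoc W Wᴴ (Y * W), ← Matrix.mul_assoc Wᴴ Y W, hKW]
  have hMW : Mm * W = W * (Vᴴ * X₁ * V) := by
    rw [hMdef, Matrix.add_mul, Matrix.smul_mul, Matrix.smul_mul]
    have h10 : S * Y * S * W = -(S * (Y * W)) := by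
      rw [Matrix.mul_assoc (S * Y) S W, hSW, Matrix.mul_neg, Matrix.mul_assoc]
    have h11 : S * (Y * W) = Y * W - W * (Vᴴ * X₁ * V) - W * (Vᴴ * X₁ * V) := by
      rw [hSdef, Matrix.sub_mul, Matrix.sub_mul, Matrix.one_mul, hPYW]
    rw [h10, h11]
    module
  have hWMW : Wᴴ * aeval Mm p * W = aeval (Vᴴ * X₁ * V) p := by
    rw [Matrix.mul_assoc, aeval_semiconj hMW p, ← Matrix.mul_assoc, hWW, Matrix.one_mul]
  -- the Y-block of aeval
  have haevalY : aeval Y p = fromBlocks (aeval X₁ p) 0 0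
      (algebraMap ℝ (Matrix (Fin m) (Fin m) ℂ) (p.eval 0)) := by
    rw [hYdef, aeval_fromBlocks, aeval_zero_matrix]
  have hWFW : Wᴴ * aeval Y p * W
      = Vᴴ * aeval X₁ p * V + (((1 - c) * f 0 : ℝ) : ℂ) • 1 := by
    rw [haevalY, hWdef, conjTranspose_fromRows_eq_fromCols_conjTranspose,
      Matrix.mul_assoc, fromBlocks_mul_fromRows, fromCols_mul_fromRows]
    simp only [Matrix.zero_mul, Matrix.mul_zero, add_zero, zero_add]
    rw [← Matrix.mul_assoc]
    congr 1
    rw [hp0, conjTranspose_smul, conjTranspose_one, Complex.star_def, Complex.conj_ofReal,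
      Algebra.algebraMap_eq_smul_one, Matrix.mul_smul, Matrix.mul_one, Matrix.smul_mul,
      Matrix.one_mul]
    rw [smul_smul, smul_comm, real_smul_eq (f 0), smul_smul, ← Complex.ofReal_mul,
      ← Complex.ofReal_mul, hs2, mul_comm (f 0) (1 - c)]
  rw [hWFW, hWMW] at hcomp
  -- collapse the halves
  have hhalves : (1/2 : ℝ) • (Vᴴ * aeval X₁ p * V + (((1 - c) * f 0 : ℝ) : ℂ) • 1)
      + (1 - 1/2 : ℝ) • (Vᴴ * aeval X₁ p * V + (((1 - c) * f 0 : ℝ) : ℂ) • 1)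
      - aeval (Vᴴ * X₁ * V) p
      = Vᴴ * aeval X₁ p * V + (((1 - c) * f 0 : ℝ) : ℂ) • 1 - aeval (Vᴴ * X₁ * V) p := by
    rw [← add_smul]
    norm_num
  rw [hhalves] at hcomp
  -- drop the f(0)-term
  have hρ : (0:ℝ) ≤ -((1 - c) * f 0) := by nlinarith
  have hmain : (Vᴴ * aeval X₁ p * V - aeval (Vᴴ * X₁ * V) p).PosSemidef := by
    have hadd := hcomp.add (psd_real_smul_one (-((1 - c) * f 0)) hρ)
    have h13 : Vᴴ * aeval X₁ p * V + (((1 - c) * f 0 : ℝ) : ℂ) • 1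
        - aeval (Vᴴ * X₁ * V) p + ((-((1 - c) * f 0) : ℝ) : ℂ) • (1 : Matrix (Fin m) (Fin m) ℂ)
        = Vᴴ * aeval X₁ p * V - aeval (Vᴴ * X₁ * V) p := by
      push_cast
      module
    rwa [h13] at hadd
  -- final trace inequality
  have hX₁p : aeval X₁ p = (aeval H p) ⊗ₖ (1 : Matrix (Fin n) (Fin n) ℂ) := by
    rw [hX₁def, aeval_kroneckerOne]
  have hfH : matFun hH f = aeval H p := matFun_eq_aeval hH f p (fun i => hpT _ (hmemH i))
  have hfK : matFun hKH f = aeval (Vᴴ * X₁ * V) p := by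
    have h14 := matFun_eq_aeval hKH f p (fun i => hpT _ (hmemK i))
    rw [h14, hKeq]
  -- identify the RHS trace
  have hG2 : Vᴴ * aeval X₁ p * V
      = Matrix.of (fun j l => ∑ pp, ∑ qq, (a * (d₁ * aᴴ)) qq pp * (aeval H p) (pp, j) (qq, l)) := by
    rw [hX₁p, hVdef, Vconj_entry g (aeval H p)]
    refine congrArg Matrix.of (funext fun j => funext fun l => ?_)
    refine Finset.sum_congr rfl fun pp _ => Finset.sum_congr rfl fun qq _ => ?_
    have h6 : (∑ i, g qq i * star (g pp i)) = (g * gᴴ) qq pp := by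
      rw [mul_apply]
      exact Finset.sum_congr rfl fun i _ => by rw [conjTranspose_apply]
    rw [h6, hggH]
  have hRHS : (d₁ * aᴴ * ptrace2 (oneTensor d₂ * matFun hH f) * a).trace
      = (d₂ * (Vᴴ * aeval X₁ p * V)).trace := by
    rw [hfH, hG2, trace_slice_aux d₂ (a * (d₁ * aᴴ)) (aeval H p)]
    rw [Matrix.trace_mul_comm (ptrace2 (oneTensor d₂ * aeval H p)) (a * (d₁ * aᴴ))]
    rw [Matrix.trace_mul_comm (d₁ * aᴴ * ptrace2 (oneTensor d₂ * aeval H p)) a]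
    rw [← Matrix.mul_assoc, ← Matrix.mul_assoc]
  rw [hfK, hRHS]
  -- conclude via trace of psd
  set s₂ : Matrix (Fin m) (Fin m) ℂ := psdSqrt d₂ with hs₂def
  have hs₂s₂ : s₂ * s₂ = d₂ := psdSqrt_mul_self hd₂.posSemidef
  have hs₂H : s₂ᴴ = s₂ := psdSqrt_conjTranspose d₂
  have htrpsd : 0 ≤ (d₂ * (Vᴴ * aeval X₁ p * V - aeval (Vᴴ * X₁ * V) p)).trace := by
    have h15 : d₂ * (Vᴴ * aeval X₁ p * V - aeval (Vᴴ * X₁ * V) p)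
        = s₂ * (s₂ * (Vᴴ * aeval X₁ p * V - aeval (Vᴴ * X₁ * V) p)) := by
      rw [← Matrix.mul_assoc, hs₂s₂]
    rw [h15, Matrix.trace_mul_comm s₂
      (s₂ * (Vᴴ * aeval X₁ p * V - aeval (Vᴴ * X₁ * V) p))]
    have h17 : ((s₂ * (Vᴴ * aeval X₁ p * V - aeval (Vᴴ * X₁ * V) p)) * s₂).PosSemidef := by
      have h18 := hmain.conjTranspose_mul_mul_same s₂
      rw [hs₂H] at h18
      exact h18
    exact trace_nonneg_of_posSemidef h17
  have h16 : (d₂ * (Vᴴ * aeval X₁ p * V)).trace - (d₂ * aeval (Vᴴ * X₁ * V) p).trace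
      = (d₂ * (Vᴴ * aeval X₁ p * V - aeval (Vᴴ * X₁ * V) p)).trace := by
    rw [Matrix.mul_sub, trace_sub]
  rw [← h16] at htrpsd
  exact sub_nonneg.mp htrpsd
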